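/- Let Q ⊂ ℝ^n be a full-dimensional simplicial reflexive polytope. Then (ι_Q − 1)·(|V(Q)| − n) ≤ n. (This is the combinatorial form, for toric varieties, of the inequality (ι_X − 1)ρ_X ≤ d for ℚ-factorial Fano varieties X: here ι_Q is the pseudo-index and |V(Q)| − n the Picard number of the toric Fano variety whose fan is spanned by the faces of Q.) -/

import Mathlib

set_option maxHeartbeats 1000000


open Matrix

/-- The polar dual `Q* = {v | ⟨v,u⟩ ≥ -1 for all u ∈ Q}`. -/
def polarDual {n : ℕ} (Q : Set (Fin n → ℝ)) : Set (Fin n → ℝ) :=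
  {v | ∀ u ∈ Q, -1 ≤ v ⬝ᵥ u}

/-- A vector of `ℝ^n` is integral if all its coordinates are integers. -/
def isIntegral {n : ℕ} (u : Fin n → ℝ) : Prop := ∀ i, ∃ z : ℤ, u i = (z : ℝ)

/-- A vector of `(ℝ^n)*` is a primitive element of the dual lattice `(ℤ^n)*` if its
coordinates are integers whose gcd is `1`. -/
def isPrimitive {n : ℕ} (χ : Fin n → ℝ) : Prop :=
  ∃ c : Fin n → ℤ, (∀ i, χ i = (c i : ℝ)) ∧ Finset.univ.gcd c = 1

/-- The set of numbers `(1 + ⟨v,u⟩)/⟨χ_μ,u⟩` over all `(n-2)`-dimensional faces `μ` of the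
simplicial reflexive polytope `Q` and both orderings `(F_v, F_{v'})` of the two facets of `Q`
containing `μ`; here `u` is the unique vertex of `F_{v'}` not lying in `μ` (encoded as: `u` is
a vertex of `F_{v'}` not in `F_v`, and all other vertices of `F_{v'}` lie in `F_v`), and
`χ_μ` is the primitive element of `(ℤ^n)*` vanishing on the linear span of `μ` (i.e. on all
vertices of `F_{v'}` other than `u`) with `⟨χ_μ,u⟩ > 0`.  `ι_Q` is its minimum. -/
def iotaSet {n : ℕ} (VQ VQd : Finset (Fin n → ℝ)) : Set ℝ :=
  {x | ∃ v ∈ VQd, ∃ v' ∈ VQd, v ≠ v' ∧ ∃ u ∈ VQ,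
    v' ⬝ᵥ u = -1 ∧ v ⬝ᵥ u ≠ -1 ∧
    (∀ w ∈ VQ, v' ⬝ᵥ w = -1 → w ≠ u → v ⬝ᵥ w = -1) ∧
    ∃ χ : Fin n → ℝ, isPrimitive χ ∧
      (∀ w ∈ VQ, v' ⬝ᵥ w = -1 → w ≠ u → χ ⬝ᵥ w = 0) ∧
      0 < χ ⬝ᵥ u ∧ x = (1 + v ⬝ᵥ u) / (χ ⬝ᵥ u)}

section helpers
variable {n : ℕ}

/-- dot product with a sum -/
lemma dot_sum {α : Type*} (s : Finset α) (f : α → Fin n → ℝ) (v : Fin n → ℝ) :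
    v ⬝ᵥ (∑ i ∈ s, f i) = ∑ i ∈ s, v ⬝ᵥ f i := by
  classical
  induction s using Finset.induction with
  | empty => simp
  | @insert a s h ih => simp [Finset.sum_insert h, ih]

/-- a small uniform bound -/
lemma exists_pos_forall {α : Type*} (F : Finset α) (g : α → ℝ) (hg : ∀ w ∈ F, 0 < g w) :
    ∃ ε : ℝ, 0 < ε ∧ ∀ w ∈ F, ε ≤ g w := by
  rcases F.eq_empty_or_nonempty with rfl | hne
  · exact ⟨1, one_pos, by simp⟩
  · exact ⟨F.inf' hne g, (Finset.lt_inf'_iff hne).2 hg, fun w hw => Finset.inf'_le g hw⟩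

/-- every dual functional is a dot product -/
lemma dual_eq_dot (f : Module.Dual ℝ (Fin n → ℝ)) :
    ∃ y : Fin n → ℝ, ∀ x, y ⬝ᵥ x = f x := by
  refine ⟨fun k => f (Pi.single k (1:ℝ)), fun x => ?_⟩
  have hx : x = ∑ k, x k • (Pi.single k (1:ℝ) : Fin n → ℝ) := by
    funext j; simp [Finset.sum_apply, Pi.single_apply]
  conv_rhs => rw [hx]
  rw [map_sum]
  simp [dotProduct, mul_comm]

/-- integrality of dot products -/
lemma dot_int {v w : Fin n → ℝ} (hv : isIntegral v) (hw : isIntegral w) :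
    ∃ z : ℤ, v ⬝ᵥ w = (z : ℝ) := by
  choose a ha using hv
  choose b hb using hw
  exact ⟨∑ i, a i * b i, by simp [dotProduct, ha, hb]⟩

lemma isPrimitive.int {χ : Fin n → ℝ} (h : isPrimitive χ) : isIntegral χ := by
  obtain ⟨c, hc, -⟩ := h; exact fun i => ⟨c i, hc i⟩

lemma isPrimitive.neg {χ : Fin n → ℝ} (h : isPrimitive χ) : isPrimitive (-χ) := by
  obtain ⟨c, hc, hg⟩ := h
  refine ⟨fun k => -(c k), fun i => by simp [hc i], ?_⟩
  rw [← hg]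
  refine Int.dvd_antisymm (Int.nonneg_of_normalize_eq_self Finset.normalize_gcd)
    (Int.nonneg_of_normalize_eq_self Finset.normalize_gcd) ?d1 ?d2
  case d1 => exact Finset.dvd_gcd fun b hb => (dvd_neg).1 (Finset.gcd_dvd hb)
  case d2 => exact Finset.dvd_gcd fun b hb => (dvd_neg).2 (Finset.gcd_dvd hb)
end helpers

section prim
variable {n : ℕ}

lemma exists_primitive_ann (b : Fin n → (Fin n → ℝ)) (hint : ∀ j, isIntegral (b j))
    (hind : LinearIndependent ℝ b) (i : Fin n) :
    ∃ χ : Fin n → ℝ, isPrimitive χ ∧ (∀ j, j ≠ i → χ ⬝ᵥ b j = 0) ∧ χ ⬝ᵥ b i ≠ 0 := by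
  classical
  choose bz hbz using fun j => hint j
  set Mz : Matrix (Fin n) (Fin n) ℤ := fun j k => bz j k with hMz
  have hdet : Mz.det ≠ 0 := by
    intro h0
    have hd : (Mz.map (Int.cast : ℤ → ℝ)).det = 0 := by
      have : Mz.map (Int.cast : ℤ → ℝ) = (Int.castRingHom ℝ).mapMatrix Mz := rfl
      rw [this, ← RingHom.map_det, h0]; simp
    obtain ⟨c, hc0, hcv⟩ := Matrix.exists_vecMul_eq_zero_iff.2 hd
    have : ∑ j, c j • b j = 0 := by
      funext k
      have := congrFun hcv k
      simpa [Matrix.vecMul, dotProduct, Finset.sum_apply, hbz] using this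
    exact hc0 (funext fun j => Fintype.linearIndependent_iff.1 hind c this j)
  set az : Fin n → ℤ := fun k => Mz.adjugate k i with haz
  have hdot : ∀ j, b j ⬝ᵥ (fun k => ((az k : ℤ) : ℝ)) =
      ((Mz.det : ℤ) : ℝ) * (if j = i then 1 else 0) := by
    intro j
    have h1 : (Mz * Mz.adjugate) j i = Mz.det * (if j = i then 1 else 0) := by
      rw [Matrix.mul_adjugate]; simp [Matrix.one_apply]
    have h2 : (Mz * Mz.adjugate) j i = ∑ k, Mz j k * az k := rfl
    rw [h2] at h1
    have := congrArg (fun z : ℤ => (z : ℝ)) h1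
    simp only [Int.cast_sum, Int.cast_mul, apply_ite Int.cast, Int.cast_one, Int.cast_zero] at this
    simpa [dotProduct, hbz, hMz] using this
  have hne : ∃ k, az k ≠ 0 := by
    by_contra hk
    push_neg at hk
    have := hdot i
    simp [hk] at this
    exact hdet (by exact_mod_cast this.symm)
  obtain ⟨k0, hk0⟩ := hne
  set g : ℤ := Finset.univ.gcd az with hg
  have hgdvd : ∀ k, g ∣ az k := fun k => Finset.gcd_dvd (Finset.mem_univ k)
  have hgne : g ≠ 0 := fun h => hk0 (Finset.gcd_eq_zero_iff.1 h k0 (Finset.mem_univ k0))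
  have hgpos : 0 < g := lt_of_le_of_ne (Int.nonneg_of_normalize_eq_self Finset.normalize_gcd)
    (Ne.symm hgne)
  set cz : Fin n → ℤ := fun k => az k / g with hcz
  have hprim : Finset.univ.gcd cz = 1 := Finset.gcd_div_eq_one (Finset.mem_univ k0) hk0
  have hrel : ∀ k, (az k : ℝ) = (g : ℝ) * (cz k : ℝ) := by
    intro k
    rw [← Int.cast_mul]
    norm_cast
    rw [hcz]
    exact (Int.mul_ediv_cancel' (hgdvd k)).symm
  refine ⟨fun k => ((cz k : ℤ) : ℝ), ⟨cz, fun _ => rfl, hprim⟩, ?_, ?_⟩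
  · intro j hj
    have := hdot j
    rw [if_neg hj, mul_zero] at this
    have h2 : b j ⬝ᵥ (fun k => ((az k : ℤ) : ℝ)) = (g:ℝ) * (b j ⬝ᵥ fun k => ((cz k : ℤ) : ℝ)) := by
      simp only [dotProduct, hrel, Finset.mul_sum]
      exact Finset.sum_congr rfl fun x _ => by ring
    rw [h2] at this
    have hgR : (g:ℝ) ≠ 0 := Int.cast_ne_zero.2 hgne
    rw [dotProduct_comm]
    exact (mul_eq_zero.1 this).resolve_left hgR
  · intro h0
    have := hdot i
    rw [if_pos rfl, mul_one] at this
    have h2 : b i ⬝ᵥ (fun k => ((az k : ℤ) : ℝ)) = (g:ℝ) * (b i ⬝ᵥ fun k => ((cz k : ℤ) : ℝ)) := by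
      simp only [dotProduct, hrel, Finset.mul_sum]
      exact Finset.sum_congr rfl fun x _ => by ring
    rw [dotProduct_comm] at h0
    rw [h2, h0, mul_zero] at this
    exact hdet (by exact_mod_cast this.symm)
end prim

section span
variable {n : ℕ}

lemma dot_linear (p : Fin n → ℝ) : IsLinearMap ℝ (fun x : Fin n → ℝ => p ⬝ᵥ x) :=
  ⟨fun x y => dotProduct_add p x y, fun c x => dotProduct_smul c p x⟩

lemma dot_linear' (p : Fin n → ℝ) : IsLinearMap ℝ (fun x : Fin n → ℝ => x ⬝ᵥ p) :=
  ⟨fun x y => add_dotProduct x y p, fun c x => smul_dotProduct c x p⟩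

lemma dot_ge_on_hull {c : ℝ} {p : Fin n → ℝ} {VQ : Finset (Fin n → ℝ)}
    (h : ∀ w ∈ VQ, c ≤ p ⬝ᵥ w) {x : Fin n → ℝ}
    (hx : x ∈ convexHull ℝ (VQ : Set (Fin n → ℝ))) : c ≤ p ⬝ᵥ x := by
  have hconv : Convex ℝ {x : Fin n → ℝ | c ≤ p ⬝ᵥ x} := convex_halfSpace_ge (dot_linear p) c
  exact convexHull_min (fun w hw => h w hw) hconv hx

lemma tight_span (VQ : Finset (Fin n → ℝ)) (v : Fin n → ℝ)
    (hv : v ∈ Set.extremePoints ℝ (polarDual (convexHull ℝ (VQ : Set (Fin n → ℝ))))) :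
    Submodule.span ℝ ((VQ.filter fun w => v ⬝ᵥ w = -1 : Finset (Fin n → ℝ)) :
      Set (Fin n → ℝ)) = ⊤ := by
  classical
  by_contra hne
  set p := Submodule.span ℝ ((VQ.filter fun w => v ⬝ᵥ w = -1 : Finset (Fin n → ℝ)) :
      Set (Fin n → ℝ)) with hp
  obtain ⟨f, hf0, hker⟩ := Submodule.exists_dual_map_eq_bot_of_lt_top
    (lt_top_iff_ne_top.2 hne) inferInstance
  obtain ⟨y, hy⟩ := dual_eq_dot f
  have hyne : y ≠ 0 := by
    intro h0
    refine hf0 (LinearMap.ext fun x => ?_)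
    rw [← hy x, h0]
    simp
  have hker' : ∀ x ∈ p, f x = 0 := by
    intro x hx
    have h1 : f x ∈ Submodule.map f p := Submodule.mem_map_of_mem hx
    rw [hker] at h1
    simpa using h1
  have hpolar : ∀ w ∈ VQ, -1 ≤ v ⬝ᵥ w := fun w hw =>
    hv.1 w (subset_convexHull ℝ _ hw)
  set F := VQ.filter (fun w => v ⬝ᵥ w ≠ -1) with hF
  obtain ⟨ε, hε, hεle⟩ := exists_pos_forall F (fun w => (1 + v ⬝ᵥ w)/(1 + |y ⬝ᵥ w|))
    (by
      intro w hw
      rw [hF, Finset.mem_filter] at hw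
      have h1 : 0 < 1 + v ⬝ᵥ w := by
        rcases lt_or_eq_of_le (hpolar w hw.1) with h | h
        · linarith
        · exact absurd h.symm hw.2
      positivity)
  have hzero : ∀ w ∈ VQ, v ⬝ᵥ w = -1 → y ⬝ᵥ w = 0 := by
    intro w hw hwt
    rw [hy]
    exact hker' w (Submodule.subset_span (by simp [Finset.mem_filter, hw, hwt]))
  have hmem : ∀ σ : ℝ, |σ| = 1 → v + (σ * ε) • y ∈
      polarDual (convexHull ℝ (VQ : Set (Fin n → ℝ))) := by
    intro σ hσ u hu
    refine dot_ge_on_hull (fun w hw => ?_) hu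
    rw [add_dotProduct, smul_dotProduct, smul_eq_mul]
    by_cases ht : v ⬝ᵥ w = -1
    · rw [hzero w hw ht, ht]; simp
    · have hwF : w ∈ F := by rw [hF, Finset.mem_filter]; exact ⟨hw, ht⟩
      have hle := hεle w hwF
      have h1 : 0 < 1 + v ⬝ᵥ w := by
        rcases lt_or_eq_of_le (hpolar w hw) with h | h
        · linarith
        · exact absurd h.symm ht
      have hyw := abs_nonneg (y ⬝ᵥ w)
      have hd : (0:ℝ) < 1 + |y ⬝ᵥ w| := by linarith
      have habs : |σ * ε * (y ⬝ᵥ w)| ≤ 1 + v ⬝ᵥ w := by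
        rw [abs_mul, abs_mul, hσ, one_mul, abs_of_pos hε]
        calc ε * |y ⬝ᵥ w| ≤ ((1 + v ⬝ᵥ w)/(1 + |y ⬝ᵥ w|)) * (1 + |y ⬝ᵥ w|) :=
              mul_le_mul hle (by linarith) hyw (by positivity)
          _ = 1 + v ⬝ᵥ w := div_mul_cancel₀ _ (ne_of_gt hd)
      have h2 := neg_abs_le (σ * ε * (y ⬝ᵥ w))
      linarith
  have hmem1 := hmem 1 (by norm_num)
  have hmem2 := hmem (-1) (by norm_num)
  have hseg : v ∈ openSegment ℝ (v + ((1:ℝ) * ε) • y) (v + ((-1:ℝ) * ε) • y) := by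
    refine ⟨1/2, 1/2, by norm_num, by norm_num, by norm_num, ?_⟩
    module
  have hconc := hv.2 hmem1 hmem2 hseg
  have h3 : ((1:ℝ) * ε) • y = 0 := by
    have := hconc
    rwa [add_eq_left] at this
  rcases smul_eq_zero.1 h3 with h | h
  · norm_num at h; exact (ne_of_gt hε) h
  · exact hyne h
end span

section claim
variable {n : ℕ}

lemma pair_lb (VQ VQd : Finset (Fin n → ℝ))
    (hVQd : (VQd : Set (Fin n → ℝ)) =
      Set.extremePoints ℝ (polarDual (convexHull ℝ (VQ : Set (Fin n → ℝ))))) :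
    ∀ v ∈ VQd, ∀ w ∈ VQ, -1 ≤ v ⬝ᵥ w := by
  intro v hv w hw
  have hv' : v ∈ Set.extremePoints ℝ (polarDual (convexHull ℝ (VQ : Set (Fin n → ℝ)))) := by
    rw [← hVQd]; exact hv
  exact hv'.1 w (subset_convexHull ℝ _ hw)

lemma iota_elem_pos (VQ VQd : Finset (Fin n → ℝ))
    (hVQd : (VQd : Set (Fin n → ℝ)) =
      Set.extremePoints ℝ (polarDual (convexHull ℝ (VQ : Set (Fin n → ℝ))))) :
    ∀ x ∈ iotaSet VQ VQd, 0 < x := by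
  rintro x ⟨v, hv, v', hv', hne, u, hu, hv'u, hvu, hcond, χ, hχ, hvan, hχu, rfl⟩
  have h1 : -1 ≤ v ⬝ᵥ u := pair_lb VQ VQd hVQd v hv u hu
  have h2 : 0 < 1 + v ⬝ᵥ u := by
    rcases lt_or_eq_of_le h1 with h | h
    · linarith
    · exact absurd h.symm hvu
  positivity

lemma extreme_ne_zero (hn : 1 ≤ n) {A : Set (Fin n → ℝ)} (h0 : (0 : Fin n → ℝ) ∈ interior A)
    {u : Fin n → ℝ} (hu : u ∈ Set.extremePoints ℝ A) : u ≠ 0 := by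
  rintro rfl
  obtain ⟨ε, hε, hball⟩ := Metric.mem_nhds_iff.1 (mem_interior_iff_mem_nhds.1 h0)
  set e0 : Fin n := ⟨0, hn⟩ with he0
  set d : Fin n → ℝ := Pi.single e0 (ε/2) with hd
  have hdn : ‖d‖ ≤ ε/2 := by
    rw [pi_norm_le_iff_of_nonneg (by positivity)]
    intro i
    rw [hd, Pi.single_apply]
    split
    · rw [Real.norm_eq_abs, abs_of_nonneg (le_of_lt (half_pos hε))]
    · rw [norm_zero]; positivity
  have hdm : d ∈ A := hball (by rw [Metric.mem_ball, dist_zero_right]; linarith)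
  have hdm' : -d ∈ A := hball (by rw [Metric.mem_ball, dist_zero_right, norm_neg]; linarith)
  have hseg : (0 : Fin n → ℝ) ∈ openSegment ℝ d (-d) :=
    ⟨1/2, 1/2, by norm_num, by norm_num, by norm_num, by module⟩
  have := (hu.2 hdm hdm' hseg)
  have hne : d e0 ≠ 0 := by rw [hd, Pi.single_apply, if_pos rfl]; positivity
  exact hne (by rw [this]; rfl)
end claim

section mainclaim
variable {n : ℕ}

lemma main_claim (hn : 1 ≤ n) (VQ VQd : Finset (Fin n → ℝ))
    (hVQ : (VQ : Set (Fin n → ℝ)) =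
      Set.extremePoints ℝ (convexHull ℝ (VQ : Set (Fin n → ℝ))))
    (h0 : (0 : Fin n → ℝ) ∈ interior (convexHull ℝ (VQ : Set (Fin n → ℝ))))
    (hVQd : (VQd : Set (Fin n → ℝ)) =
      Set.extremePoints ℝ (polarDual (convexHull ℝ (VQ : Set (Fin n → ℝ)))))
    (hsimp : ∀ v ∈ VQd, (VQ.filter fun u => v ⬝ᵥ u = -1).card = n)
    (hrefl : ∀ u ∈ VQ, isIntegral u) (hrefld : ∀ v ∈ VQd, isIntegral v)
    (ι : ℝ) (hι : IsLeast (iotaSet VQ VQd) ι)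
    (v : Fin n → ℝ) (hv : v ∈ VQd) (u : Fin n → ℝ) (hu : u ∈ VQ) (hune : v ⬝ᵥ u ≠ -1) :
    ι - 1 ≤ v ⬝ᵥ u := by
  classical
  have hιpos : 0 < ι := iota_elem_pos VQ VQd hVQd ι hι.1
  have hpolar := pair_lb VQ VQd hVQd
  -- the facet B of v
  set B := VQ.filter (fun w => v ⬝ᵥ w = -1) with hBdef
  have hB : B.card = n := hsimp v hv
  have hvx : v ∈ Set.extremePoints ℝ (polarDual (convexHull ℝ (VQ : Set (Fin n → ℝ)))) := by
    rw [← hVQd]; exact hv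
  have hspan : Submodule.span ℝ (B : Set (Fin n → ℝ)) = ⊤ := tight_span VQ v hvx
  -- enumerate B
  set e := Finset.equivFinOfCardEq hB with he
  set b : Fin n → (Fin n → ℝ) := fun j => ((e.symm j : B) : Fin n → ℝ) with hbdef
  have hbB : ∀ j, b j ∈ B := fun j => (e.symm j).2
  have hbVQ : ∀ j, b j ∈ VQ := fun j => (Finset.filter_subset _ _) (hbB j)
  have hvb : ∀ j, v ⬝ᵥ b j = -1 := fun j => (Finset.mem_filter.1 (hbB j)).2
  have hbinj : Function.Injective b := fun j k hjk => by
    have := Subtype.ext hjk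
    simpa using e.symm.injective this
  have hbsurj : ∀ w ∈ B, ∃ j, b j = w := by
    intro w hw
    exact ⟨e ⟨w, hw⟩, by rw [hbdef]; simp⟩
  have hrange : Set.range b = (B : Set (Fin n → ℝ)) := by
    ext w
    constructor
    · rintro ⟨j, rfl⟩; exact hbB j
    · intro hw; exact hbsurj w hw
  have htop : ⊤ ≤ Submodule.span ℝ (Set.range b) := by rw [hrange, hspan]
  have hcard : Fintype.card (Fin n) = Module.finrank ℝ (Fin n → ℝ) := by
    simp [Module.finrank_fin_fun]
  set 𝔅 := basisOfTopLeSpanOfCardEqFinrank b htop hcard with h𝔅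
  have hbe : ⇑𝔅 = b := coe_basisOfTopLeSpanOfCardEqFinrank b htop hcard
  have hlin : LinearIndependent ℝ b := hbe ▸ 𝔅.linearIndependent
  -- representation of vectors
  have hrep : ∀ x : Fin n → ℝ, x = ∑ j, 𝔅.repr x j • b j := by
    intro x
    conv_lhs => rw [← 𝔅.sum_repr x]
    exact Finset.sum_congr rfl fun j _ => by rw [hbe]
  have hdotrep : ∀ (p x : Fin n → ℝ), p ⬝ᵥ x = ∑ j, 𝔅.repr x j * (p ⬝ᵥ b j) := by
    intro p x
    conv_lhs => rw [hrep x]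
    rw [dot_sum]
    exact Finset.sum_congr rfl fun j _ => by rw [dotProduct_smul]; rfl
  -- v ⬝ᵥ u is a nonneg integer
  obtain ⟨z, hz⟩ := dot_int (hrefld v hv) (hrefl u hu)
  have hz0 : 0 ≤ z := by
    by_contra hzn
    push_neg at hzn
    have h1 : -1 ≤ v ⬝ᵥ u := hpolar v hv u hu
    have : z = -1 := by
      rw [hz] at h1
      have : (-1 : ℝ) = ((-1 : ℤ) : ℝ) := by norm_num
      rw [this] at h1
      have := Int.cast_le.1 h1  -- -1 ≤ z
      omega
    exact hune (by rw [hz, this]; norm_num)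
  have hvu0 : 0 ≤ v ⬝ᵥ u := by rw [hz]; exact_mod_cast hz0
  -- u ≠ 0 and a negative coordinate
  have hu0 : u ≠ 0 := extreme_ne_zero hn h0 (by rw [← hVQ]; exact hu)
  have hsumneg : ∑ j, 𝔅.repr u j ≤ 0 := by
    have := hdotrep v u
    simp only [hvb, mul_neg_one] at this
    rw [Finset.sum_neg_distrib] at this
    linarith
  have hexi : ∃ i, 𝔅.repr u i < 0 := by
    by_contra hno
    push_neg at hno
    have hz' : ∀ j ∈ Finset.univ, 𝔅.repr u j = 0 := by
      intro j _
      have h1 : 0 ≤ 𝔅.repr u j := hno j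
      by_contra hne'
      have h2 : 0 < 𝔅.repr u j := lt_of_le_of_ne h1 (Ne.symm hne')
      have h3 : ∑ k, 𝔅.repr u k ≥ 𝔅.repr u j := by
        apply Finset.single_le_sum (fun k _ => hno k) (Finset.mem_univ j)
      linarith
    apply hu0
    rw [hrep u]
    apply Finset.sum_eq_zero
    intro j hj
    rw [hz' j hj, zero_smul]
  obtain ⟨i, hineg⟩ := hexi
  -- the primitive normal χ
  obtain ⟨χ₀, hχ₀prim, hχ₀van, hχ₀bi⟩ :=
    exists_primitive_ann b (fun j => hrefl _ (hbVQ j)) hlin i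
  have hχ₀u : χ₀ ⬝ᵥ u = 𝔅.repr u i * (χ₀ ⬝ᵥ b i) := by
    rw [hdotrep χ₀ u, Finset.sum_eq_single i]
    · intro j _ hj; rw [hχ₀van j hj, mul_zero]
    · intro h; exact absurd (Finset.mem_univ i) h
  have hχ₀une : χ₀ ⬝ᵥ u ≠ 0 := by
    rw [hχ₀u]
    exact mul_ne_zero (ne_of_lt hineg) hχ₀bi
  obtain ⟨χ, hχprim, hχvan, hχu⟩ :
      ∃ χ : Fin n → ℝ, isPrimitive χ ∧ (∀ j, j ≠ i → χ ⬝ᵥ b j = 0) ∧ 0 < χ ⬝ᵥ u := by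
    rcases lt_or_gt_of_ne hχ₀une with hlt | hgt
    · refine ⟨-χ₀, hχ₀prim.neg, fun j hj => ?_, ?_⟩
      · rw [neg_dotProduct, hχ₀van j hj, neg_zero]
      · rw [neg_dotProduct]; linarith
    · exact ⟨χ₀, hχ₀prim, hχ₀van, hgt⟩
  have hχu' : χ ⬝ᵥ u = 𝔅.repr u i * (χ ⬝ᵥ b i) := by
    rw [hdotrep χ u, Finset.sum_eq_single i]
    · intro j _ hj; rw [hχvan j hj, mul_zero]
    · intro h; exact absurd (Finset.mem_univ i) h
  have hχbi : χ ⬝ᵥ b i < 0 := by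
    rcases lt_trichotomy (χ ⬝ᵥ b i) 0 with h | h | h
    · exact h
    · rw [hχu', h, mul_zero] at hχu; linarith
    · nlinarith [hχu' ▸ hχu]
  have htightχ : ∀ w ∈ VQ, v ⬝ᵥ w = -1 → χ ⬝ᵥ w ≤ 0 := by
    intro w hw hwt
    obtain ⟨j, rfl⟩ := hbsurj w (Finset.mem_filter.2 ⟨hw, hwt⟩)
    by_cases hj : j = i
    · rw [hj]; exact le_of_lt hχbi
    · rw [hχvan j hj]
  -- the minimization
  set T := VQ.filter (fun w => 0 < χ ⬝ᵥ w) with hTdef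
  have huT : u ∈ T := Finset.mem_filter.2 ⟨hu, hχu⟩
  have hTnum : ∀ w ∈ T, 0 < 1 + v ⬝ᵥ w := by
    intro w hw
    rw [hTdef, Finset.mem_filter] at hw
    rcases lt_or_eq_of_le (hpolar v hv w hw.1) with h | h
    · linarith
    · exact absurd (htightχ w hw.1 h.symm) (not_le.2 hw.2)
  obtain ⟨u', hu'T, hu'min⟩ := Finset.exists_min_image T (fun w => (1 + v ⬝ᵥ w)/(χ ⬝ᵥ w)) ⟨u, huT⟩
  have hu'VQ : u' ∈ VQ := (Finset.filter_subset _ _) hu'T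
  have hχu'pos : 0 < χ ⬝ᵥ u' := (Finset.mem_filter.1 hu'T).2
  set t := (1 + v ⬝ᵥ u')/(χ ⬝ᵥ u') with htdef
  have htpos : 0 < t := div_pos (hTnum u' hu'T) hχu'pos
  set v' := v - t • χ with hv'def
  have hv'dot : ∀ w : Fin n → ℝ, v' ⬝ᵥ w = v ⬝ᵥ w - t * (χ ⬝ᵥ w) := by
    intro w
    rw [hv'def, sub_dotProduct, smul_dotProduct]
    rfl
  have hv'w : ∀ w ∈ VQ, -1 ≤ v' ⬝ᵥ w := by
    intro w hw
    rw [hv'dot]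
    by_cases hχw : 0 < χ ⬝ᵥ w
    · have hwT : w ∈ T := Finset.mem_filter.2 ⟨hw, hχw⟩
      have := hu'min w hwT
      have h2 : t * (χ ⬝ᵥ w) ≤ 1 + v ⬝ᵥ w := by
        rw [div_le_div_iff₀ hχu'pos hχw] at this
        calc t * (χ ⬝ᵥ w) = ((1 + v ⬝ᵥ u') * (χ ⬝ᵥ w))/(χ ⬝ᵥ u') := by
              rw [htdef]; ring
          _ ≤ 1 + v ⬝ᵥ w := by
              rw [div_le_iff₀ hχu'pos]
              linarith [this]
      linarith
    · push_neg at hχw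
      have := hpolar v hv w hw
      nlinarith
  have hv'mem : v' ∈ polarDual (convexHull ℝ (VQ : Set (Fin n → ℝ))) := by
    intro x hx
    exact dot_ge_on_hull (fun w hw => hv'w w hw) hx
  have hv'u' : v' ⬝ᵥ u' = -1 := by
    rw [hv'dot, htdef, div_mul_cancel₀ _ (ne_of_gt hχu'pos)]
    ring
  have hv'bj : ∀ j, j ≠ i → v' ⬝ᵥ b j = -1 := by
    intro j hj
    rw [hv'dot, hχvan j hj, mul_zero, sub_zero, hvb]
  -- the set S
  have hu'B : u' ∉ B := by
    intro hmem
    have := htightχ u' hu'VQ (Finset.mem_filter.1 hmem).2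
    linarith
  set S := insert u' (B.erase (b i)) with hSdef
  have hSsub : S ⊆ VQ := by
    intro w hw
    rw [hSdef, Finset.mem_insert] at hw
    rcases hw with rfl | hw
    · exact hu'VQ
    · exact (Finset.filter_subset _ _) (Finset.mem_of_mem_erase hw)
  have hScard : S.card = n := by
    rw [hSdef, Finset.card_insert_of_notMem
      (fun h => hu'B (Finset.mem_of_mem_erase h)),
      Finset.card_erase_of_mem (hbB i), hB]
    omega
  have hStight : ∀ w ∈ S, v' ⬝ᵥ w = -1 := by
    intro w hw
    rw [hSdef, Finset.mem_insert] at hw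
    rcases hw with rfl | hw
    · exact hv'u'
    · obtain ⟨j, rfl⟩ := hbsurj w (Finset.mem_of_mem_erase hw)
      have hj : j ≠ i := fun h => (Finset.ne_of_mem_erase hw) (by rw [h])
      exact hv'bj j hj
  -- S spans
  have hu'S : u' ∈ S := Finset.mem_insert_self _ _
  have hbjS : ∀ j, j ≠ i → b j ∈ S := by
    intro j hj
    rw [hSdef, Finset.mem_insert]
    exact Or.inr (Finset.mem_erase.2 ⟨fun h => hj (hbinj h), hbB j⟩)
  have hreprui : 𝔅.repr u' i ≠ 0 := by
    intro h
    have h1 : χ ⬝ᵥ u' = 𝔅.repr u' i * (χ ⬝ᵥ b i) := by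
      rw [hdotrep χ u', Finset.sum_eq_single i]
      · intro j _ hj; rw [hχvan j hj, mul_zero]
      · intro h'; exact absurd (Finset.mem_univ i) h'
    rw [h1, h, zero_mul] at hχu'pos
    exact lt_irrefl 0 hχu'pos
  have hSspan : Submodule.span ℝ (S : Set (Fin n → ℝ)) = ⊤ := by
    have hbiS : b i ∈ Submodule.span ℝ (S : Set (Fin n → ℝ)) := by
      have hsplit : u' = 𝔅.repr u' i • b i + ∑ j ∈ Finset.univ.erase i, 𝔅.repr u' j • b j := by
        rw [Finset.add_sum_erase _ (fun j => 𝔅.repr u' j • b j) (Finset.mem_univ i)]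
        exact hrep u'
      have hsum : (∑ j ∈ Finset.univ.erase i, 𝔅.repr u' j • b j) ∈
          Submodule.span ℝ (S : Set (Fin n → ℝ)) := by
        apply Submodule.sum_mem
        intro j hj
        exact Submodule.smul_mem _ _
          (Submodule.subset_span (hbjS j (Finset.ne_of_mem_erase hj)))
      have hu'span : u' ∈ Submodule.span ℝ (S : Set (Fin n → ℝ)) :=
        Submodule.subset_span hu'S
      have : 𝔅.repr u' i • b i ∈ Submodule.span ℝ (S : Set (Fin n → ℝ)) := by
        have hsub := Submodule.sub_mem _ hu'span hsum
        have h2 : 𝔅.repr u' i • b i =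
            u' - ∑ j ∈ Finset.univ.erase i, 𝔅.repr u' j • b j := by
          rw [eq_sub_iff_add_eq]; exact hsplit.symm
        rw [h2]; exact hsub
      have h2 := Submodule.smul_mem _ (𝔅.repr u' i)⁻¹ this
      rwa [smul_smul, inv_mul_cancel₀ hreprui, one_smul] at h2
    rw [eq_top_iff, ← hspan]
    apply Submodule.span_le.2
    intro w hw
    obtain ⟨j, rfl⟩ := hbsurj w hw
    by_cases hj : j = i
    · rw [hj]; exact hbiS
    · exact Submodule.subset_span (hbjS j hj)
  -- v' is an extreme point
  have hv'ext : v' ∈ Set.extremePoints ℝ (polarDual (convexHull ℝ (VQ : Set (Fin n → ℝ)))) := by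
    refine ⟨hv'mem, ?_⟩
    intro p hp q hq hseg
    obtain ⟨a, c, ha, hc, hac, heq⟩ := hseg
    have hkey : ∀ w ∈ S, p ⬝ᵥ w = -1 ∧ q ⬝ᵥ w = -1 := by
      intro w hw
      have hwVQ : w ∈ VQ := hSsub hw
      have hpw : -1 ≤ p ⬝ᵥ w := hp w (subset_convexHull ℝ _ hwVQ)
      have hqw : -1 ≤ q ⬝ᵥ w := hq w (subset_convexHull ℝ _ hwVQ)
      have hsum : a * (p ⬝ᵥ w) + c * (q ⬝ᵥ w) = -1 := by
        have := congrArg (fun x => x ⬝ᵥ w) heq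
        simpa [add_dotProduct, smul_dotProduct, hStight w hw] using this
      constructor
      · by_contra hne'
        have h1 : -1 < p ⬝ᵥ w := lt_of_le_of_ne hpw (Ne.symm hne')
        nlinarith
      · by_contra hne'
        have h1 : -1 < q ⬝ᵥ w := lt_of_le_of_ne hqw (Ne.symm hne')
        nlinarith
    have hpq : p = q := by
      have hL : ∀ w ∈ S, (p - q) ⬝ᵥ w = 0 := by
        intro w hw
        rw [sub_dotProduct, (hkey w hw).1, (hkey w hw).2, sub_self]
      have hL2 : ∀ x : Fin n → ℝ, (p - q) ⬝ᵥ x = 0 := by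
        intro x
        have hxS : x ∈ Submodule.span ℝ (S : Set (Fin n → ℝ)) := by
          rw [hSspan]; trivial
        induction hxS using Submodule.span_induction with
        | mem w hw => exact hL w hw
        | zero => simp
        | add x y _ _ hx hy => rw [dotProduct_add, hx, hy, add_zero]
        | smul c x _ hx => rw [dotProduct_smul, hx, smul_zero]
      have := hL2 (p - q)
      rw [dotProduct_self_eq_zero] at this
      exact sub_eq_zero.1 this
    subst hpq
    have hpv : p = v' := by
      rw [← heq, ← add_smul, hac, one_smul]
    exact hpv
  have hv'VQd : v' ∈ VQd := by
    have : v' ∈ (VQd : Set (Fin n → ℝ)) := by rw [hVQd]; exact hv'ext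
    exact this
  -- v ≠ v'
  have hvu'ne : v ⬝ᵥ u' ≠ -1 := by
    intro h
    exact absurd (htightχ u' hu'VQ h) (not_le.2 hχu'pos)
  have hvne : v ≠ v' := by
    intro h
    rw [← h] at hv'u'
    exact hvu'ne hv'u'
  -- filter for v' equals S
  have hfilt : S = VQ.filter (fun w => v' ⬝ᵥ w = -1) := by
    apply Finset.eq_of_subset_of_card_le
    · intro w hw
      exact Finset.mem_filter.2 ⟨hSsub hw, hStight w hw⟩
    · exact le_of_eq ((hsimp v' hv'VQd).trans hScard.symm)
  have hSother : ∀ w ∈ VQ, v' ⬝ᵥ w = -1 → w ≠ u' → (v ⬝ᵥ w = -1 ∧ χ ⬝ᵥ w = 0) := by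
    intro w hw hwt hwu
    have hwS : w ∈ S := by rw [hfilt]; exact Finset.mem_filter.2 ⟨hw, hwt⟩
    rw [hSdef, Finset.mem_insert] at hwS
    rcases hwS with rfl | hwS
    · exact absurd rfl hwu
    · obtain ⟨j, rfl⟩ := hbsurj w (Finset.mem_of_mem_erase hwS)
      have hj : j ≠ i := fun h => (Finset.ne_of_mem_erase hwS) (by rw [h])
      exact ⟨hvb j, hχvan j hj⟩
  -- the iota set element
  have helem : t ∈ iotaSet VQ VQd := by
    refine ⟨v, hv, v', hv'VQd, hvne, u', hu'VQ, hv'u', hvu'ne,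
      fun w hw h1 h2 => (hSother w hw h1 h2).1, χ, hχprim,
      fun w hw h1 h2 => (hSother w hw h1 h2).2, hχu'pos, htdef⟩
  have hιt : ι ≤ t := hι.2 helem
  -- conclude
  have hmin := hu'min u huT
  obtain ⟨zχ, hzχ⟩ := dot_int hχprim.int (hrefl u hu)
  have hzχ1 : (1:ℝ) ≤ χ ⬝ᵥ u := by
    have h1 : (0:ℝ) < (zχ : ℝ) := hzχ ▸ hχu
    have h2 : (1:ℤ) ≤ zχ := by exact_mod_cast h1
    rw [hzχ]
    exact_mod_cast h2
  have hfinal : ι * (χ ⬝ᵥ u) ≤ 1 + v ⬝ᵥ u := by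
    have h1 : ι ≤ (1 + v ⬝ᵥ u)/(χ ⬝ᵥ u) := le_trans hιt hmin
    rw [le_div_iff₀ hχu] at h1
    exact h1
  nlinarith
end mainclaim

section final
variable {n : ℕ}

lemma exists_v0 (VQ VQd : Finset (Fin n → ℝ))
    (h0 : (0 : Fin n → ℝ) ∈ interior (convexHull ℝ (VQ : Set (Fin n → ℝ))))
    (hVQd : (VQd : Set (Fin n → ℝ)) =
      Set.extremePoints ℝ (polarDual (convexHull ℝ (VQ : Set (Fin n → ℝ)))))
    (hVQdne : VQd.Nonempty) (s : Fin n → ℝ) :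
    ∃ v₀ ∈ VQd, v₀ ⬝ᵥ s ≤ 0 := by
  classical
  have hVQne : VQ.Nonempty := by
    rcases VQ.eq_empty_or_nonempty with rfl | h
    · simp only [Finset.coe_empty, convexHull_empty, interior_empty] at h0
      exact absurd h0 (Set.notMem_empty 0)
    · exact h
  set Q := convexHull ℝ (VQ : Set (Fin n → ℝ)) with hQ
  set P := polarDual Q with hP
  -- P is convex
  have hPconv : Convex ℝ P := by
    intro x hx y hy a c ha hc hac
    intro w hw
    have h1 : (a • x + c • y) ⬝ᵥ w = a * (x ⬝ᵥ w) + c * (y ⬝ᵥ w) := by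
      rw [add_dotProduct, smul_dotProduct, smul_dotProduct]; rfl
    rw [h1]
    have h2 : a * (-1) ≤ a * (x ⬝ᵥ w) := mul_le_mul_of_nonneg_left (hx w hw) ha
    have h3 : c * (-1) ≤ c * (y ⬝ᵥ w) := mul_le_mul_of_nonneg_left (hy w hw) hc
    nlinarith
  -- P is closed
  have hPclosed : IsClosed P := by
    have : P = ⋂ (u : Q), {v : Fin n → ℝ | -1 ≤ v ⬝ᵥ (u : Fin n → ℝ)} := by
      ext v
      simp only [Set.mem_iInter, Set.mem_setOf_eq]
      exact ⟨fun h u => h u u.2, fun h u hu => h ⟨u, hu⟩⟩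
    rw [this]
    refine isClosed_iInter fun u => isClosed_le continuous_const ?_
    exact continuous_finset_sum _ fun i _ => (continuous_apply i).mul continuous_const
  -- P is bounded
  obtain ⟨ε, hε, hball⟩ := Metric.mem_nhds_iff.1 (mem_interior_iff_mem_nhds.1 h0)
  have hPbdd : P ⊆ Metric.closedBall 0 (2/ε) := by
    intro v hv
    rw [Metric.mem_closedBall, dist_zero_right]
    rw [pi_norm_le_iff_of_nonneg (by positivity)]
    intro k
    have hmem : ∀ σ : ℝ, |σ| = 1 → (Pi.single k (σ * (ε/2)) : Fin n → ℝ) ∈ Q := by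
      intro σ hσ
      apply hball
      rw [Metric.mem_ball, dist_zero_right]
      have : ‖(Pi.single k (σ * (ε/2)) : Fin n → ℝ)‖ ≤ ε/2 := by
        rw [pi_norm_le_iff_of_nonneg (by positivity)]
        intro i
        rcases eq_or_ne i k with rfl | hne
        · simp only [Pi.single_eq_same, Real.norm_eq_abs, abs_mul, hσ, one_mul]
          rw [abs_of_nonneg (by positivity)]
        · rw [Pi.single_eq_of_ne hne, norm_zero]; positivity
      linarith
    have h1 := hv _ (hmem 1 (by norm_num))
    have h2 := hv _ (hmem (-1) (by norm_num))
    rw [dotProduct_single] at h1 h2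
    rw [Real.norm_eq_abs, abs_le]
    have hd : (-(2/ε) : ℝ) = (-2)/ε := by ring
    constructor
    · rw [hd, div_le_iff₀ hε]
      nlinarith
    · rw [le_div_iff₀ hε]
      nlinarith
  have hPcompact : IsCompact P :=
    Metric.isCompact_iff_isClosed_bounded.2
      ⟨hPclosed, (Metric.isBounded_closedBall).subset hPbdd⟩
  -- Krein-Milman
  have hKM : closure (convexHull ℝ (Set.extremePoints ℝ P)) = P :=
    closure_convexHull_extremePoints hPcompact hPconv
  -- suppose all vertices pair positively with s
  by_contra hcon
  push_neg at hcon
  set ε₀ := VQd.inf' hVQdne (fun v => v ⬝ᵥ s) with hε₀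
  have hε₀pos : 0 < ε₀ := (Finset.lt_inf'_iff hVQdne).2 fun v hv => hcon v hv
  have hH : P ⊆ {x : Fin n → ℝ | ε₀ ≤ x ⬝ᵥ s} := by
    rw [← hKM]
    apply closure_minimal
    · apply convexHull_min
      · rw [← hVQd]
        intro v hv
        show ε₀ ≤ v ⬝ᵥ s
        exact Finset.inf'_le _ (Finset.mem_coe.1 hv)
      · exact convex_halfSpace_ge (dot_linear' s) ε₀
    · exact isClosed_le continuous_const
        (continuous_finset_sum _ fun i _ => (continuous_apply i).mul continuous_const)
  -- construct a point of P pairing nonpositively with s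
  set M := VQ.sup' hVQne (fun w => |s ⬝ᵥ w|) with hM
  obtain ⟨w1, hw1⟩ := hVQne
  have hM0 : 0 ≤ M := le_trans (abs_nonneg (s ⬝ᵥ w1)) (Finset.le_sup' (fun w => |s ⬝ᵥ w|) hw1)
  set w₀ : Fin n → ℝ := (-(1/(M+1))) • s with hw₀
  have hw₀P : w₀ ∈ P := by
    intro x hx
    refine dot_ge_on_hull (fun w hw => ?_) hx
    rw [hw₀, smul_dotProduct, smul_eq_mul]
    have h1 : |s ⬝ᵥ w| ≤ M := Finset.le_sup' (fun w => |s ⬝ᵥ w|) hw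
    have hM1 : (0:ℝ) < M + 1 := by linarith
    rw [neg_mul, le_neg]
    have hXle : s ⬝ᵥ w ≤ M + 1 := le_trans (le_abs_self _) (by linarith)
    have hfrac : (0:ℝ) ≤ 1/(M+1) := by positivity
    have hmul := mul_le_mul_of_nonneg_left hXle hfrac
    rw [one_div_mul_cancel (ne_of_gt hM1)] at hmul
    linarith
  have hss : 0 ≤ s ⬝ᵥ s := Finset.sum_nonneg fun i _ => mul_self_nonneg _
  have := hH hw₀P
  rw [Set.mem_setOf_eq, hw₀, smul_dotProduct, smul_eq_mul] at this
  have hfin : (-(1/(M+1))) * (s ⬝ᵥ s) ≤ 0 := by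
    have hM1 : (0:ℝ) < M + 1 := by linarith
    have : 0 ≤ (1/(M+1)) * (s ⬝ᵥ s) := by positivity
    linarith
  linarith
end final


/-- For a full-dimensional simplicial reflexive polytope `Q ⊂ ℝ^n`, the
pseudo-index `ι_Q` satisfies `(ι_Q - 1) · (|V(Q)| - n) ≤ n`. -/
theorem pseudoindex_inequality {n : ℕ} (hn : 1 ≤ n)
    (VQ VQd : Finset (Fin n → ℝ))
    -- `VQ` is the vertex set of the polytope `Q = conv(VQ)`
    (hVQ : (VQ : Set (Fin n → ℝ)) =
      Set.extremePoints ℝ (convexHull ℝ (VQ : Set (Fin n → ℝ))))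
    -- `0` lies in the interior of `Q` (in particular `Q` is full-dimensional)
    (h0 : (0 : Fin n → ℝ) ∈ interior (convexHull ℝ (VQ : Set (Fin n → ℝ))))
    -- `VQd` is the vertex set of the polar dual `Q*`
    (hVQd : (VQd : Set (Fin n → ℝ)) =
      Set.extremePoints ℝ (polarDual (convexHull ℝ (VQ : Set (Fin n → ℝ)))))
    -- `Q` is simplicial: every facet has exactly `n` vertices
    (hsimp : ∀ v ∈ VQd, (VQ.filter fun u => v ⬝ᵥ u = -1).card = n)
    -- `Q` is reflexive: vertices of `Q` and of `Q*` are lattice points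
    (hrefl : ∀ u ∈ VQ, isIntegral u) (hrefld : ∀ v ∈ VQd, isIntegral v)
    -- `ι` is the pseudo-index `ι_Q`
    (ι : ℝ) (hι : IsLeast (iotaSet VQ VQd) ι) :
    (ι - 1) * ((VQ.card : ℝ) - n) ≤ n := by
  classical
  have hVQdne : VQd.Nonempty := by
    obtain ⟨v, hv, -⟩ := hι.1
    exact ⟨v, hv⟩
  set s := ∑ u ∈ VQ, u with hs
  obtain ⟨v₀, hv₀, hv₀s⟩ := exists_v0 VQ VQd h0 hVQd hVQdne s
  have hdot : v₀ ⬝ᵥ s = ∑ u ∈ VQ, v₀ ⬝ᵥ u := dot_sum VQ (fun u => u) v₀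
  have hsplit : ∑ u ∈ VQ, v₀ ⬝ᵥ u =
      (∑ u ∈ VQ.filter (fun w => v₀ ⬝ᵥ w = -1), v₀ ⬝ᵥ u) +
       ∑ u ∈ VQ.filter (fun w => ¬ v₀ ⬝ᵥ w = -1), v₀ ⬝ᵥ u :=
    (Finset.sum_filter_add_sum_filter_not VQ _ _).symm
  have hsum1 : ∑ u ∈ VQ.filter (fun w => v₀ ⬝ᵥ w = -1), v₀ ⬝ᵥ u = -(n : ℝ) := by
    rw [Finset.sum_congr rfl (fun w hw => (Finset.mem_filter.1 hw).2),
      Finset.sum_const, hsimp v₀ hv₀, nsmul_eq_mul]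
    ring
  set c := (VQ.filter (fun w => ¬ v₀ ⬝ᵥ w = -1)).card with hc
  have hcards : n + c = VQ.card := by
    have h1 := Finset.card_filter_add_card_filter_not
      (s := VQ) (p := fun w => v₀ ⬝ᵥ w = -1)
    rw [hsimp v₀ hv₀] at h1
    exact h1
  have hsum2 : (c : ℝ) * (ι - 1) ≤ ∑ u ∈ VQ.filter (fun w => ¬ v₀ ⬝ᵥ w = -1), v₀ ⬝ᵥ u := by
    have h := Finset.card_nsmul_le_sum (VQ.filter (fun w => ¬ v₀ ⬝ᵥ w = -1))
      (fun u => v₀ ⬝ᵥ u) (ι - 1)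
      (fun w hw => by
        have hw' := Finset.mem_filter.1 hw
        have := main_claim hn VQ VQd hVQ h0 hVQd hsimp hrefl hrefld ι hι v₀ hv₀ w hw'.1 hw'.2
        linarith)
    rwa [nsmul_eq_mul] at h
  have hcast : ((VQ.card : ℝ) - n) = (c : ℝ) := by
    have h2 : ((n + c : ℕ) : ℝ) = (VQ.card : ℝ) := by rw [hcards]
    push_cast at h2
    linarith
  rw [hcast]
  nlinarith [hv₀s, hdot, hsplit, hsum1, hsum2]
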